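/- arXiv:1105.5992 — 5 statements merged into one kernel-verified Lean document; each statement's English description precedes it below -/
import Mathlib

section
/- Let θ₁, θ₃ be real numbers with 0 ≤ θ₃ < θ₁. Then the function w(θ₂) = (θ₁ + θ₂)/√(θ₁(θ₁ + 2θ₂ + θ₃)), defined for θ₂ ∈ [-√(θ₁θ₃), √(θ₁θ₃)], attains its global minimum value √(1 - θ₃/θ₁), achieved at θ₂ = -θ₃. -/
theorem w_global_min (θ₁ θ₃ : ℝ) (h3 : 0 ≤ θ₃) (h13 : θ₃ < θ₁) :
    (θ₁ + (-θ₃)) / Real.sqrt (θ₁ * (θ₁ + 2 * (-θ₃) + θ₃)) = Real.sqrt (1 - θ₃ / θ₁) ∧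
    -θ₃ ∈ Set.Icc (-Real.sqrt (θ₁ * θ₃)) (Real.sqrt (θ₁ * θ₃)) ∧
    ∀ θ₂ ∈ Set.Icc (-Real.sqrt (θ₁ * θ₃)) (Real.sqrt (θ₁ * θ₃)),
      Real.sqrt (1 - θ₃ / θ₁) ≤ (θ₁ + θ₂) / Real.sqrt (θ₁ * (θ₁ + 2 * θ₂ + θ₃)) := by
  have h1 : 0 < θ₁ := h3.trans_lt h13
  have ha : 0 < θ₁ - θ₃ := by linarith
  have hrw : 1 - θ₃ / θ₁ = (θ₁ - θ₃) / θ₁ := by field_simp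
  have hs1 : Real.sqrt θ₁ > 0 := Real.sqrt_pos.mpr h1
  have hsa : Real.sqrt (θ₁ - θ₃) > 0 := Real.sqrt_pos.mpr ha
  have ea : Real.sqrt (θ₁ - θ₃) * Real.sqrt (θ₁ - θ₃) = θ₁ - θ₃ := Real.mul_self_sqrt ha.le
  refine ⟨?_, ?_, ?_⟩
  · rw [show θ₁ + 2 * (-θ₃) + θ₃ = θ₁ - θ₃ by ring, hrw, Real.sqrt_div' _ h1.le,
      Real.sqrt_mul h1.le, show θ₁ + -θ₃ = θ₁ - θ₃ by ring,
      div_eq_div_iff (by positivity) hs1.ne']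
    nlinarith [ea]
  · constructor
    · simp only [neg_le_neg_iff]
      have hs : Real.sqrt (θ₁ * θ₃) * Real.sqrt (θ₁ * θ₃) = θ₁ * θ₃ :=
        Real.mul_self_sqrt (by positivity)
      nlinarith [Real.sqrt_nonneg (θ₁ * θ₃), hs]
    · exact le_trans (by linarith) (Real.sqrt_nonneg _)
  · rintro θ₂ ⟨hl, hu⟩
    have hs : Real.sqrt (θ₁ * θ₃) * Real.sqrt (θ₁ * θ₃) = θ₁ * θ₃ :=
      Real.mul_self_sqrt (by positivity)
    have hsn := Real.sqrt_nonneg (θ₁ * θ₃)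
    have hd : 0 < θ₁ + 2 * θ₂ + θ₃ := by nlinarith [sq_nonneg (θ₁ - θ₃)]
    have hp : 0 < θ₁ + θ₂ := by nlinarith
    have hden : 0 < Real.sqrt (θ₁ * (θ₁ + 2 * θ₂ + θ₃)) := Real.sqrt_pos.mpr (by positivity)
    rw [hrw, le_div_iff₀ hden, ← Real.sqrt_mul (by positivity)]
    have e2 : (θ₁ - θ₃) / θ₁ * (θ₁ * (θ₁ + 2 * θ₂ + θ₃))
        = (θ₁ - θ₃) * (θ₁ + 2 * θ₂ + θ₃) := by field_simp
    rw [e2]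
    calc Real.sqrt ((θ₁ - θ₃) * (θ₁ + 2 * θ₂ + θ₃)) ≤ Real.sqrt ((θ₁ + θ₂) ^ 2) :=
          Real.sqrt_le_sqrt (by nlinarith [sq_nonneg (θ₂ + θ₃)])
      _ = θ₁ + θ₂ := Real.sqrt_sq hp.le
end

section
/- Let θ₁, θ₃ > 0 and θ₂ ∈ ℝ with -L√(θ₁θ₃) ≤ θ₂ < √(θ₁θ₃), where L ∈ (0,1). Define β(t) = (θ₁ + tθ₂)/√(θ₁(θ₁ + 2tθ₂ + t²θ₃)). Then for every t ∈ [0,1] with β(t) ≥ L, we have |β'(t)| ≤ 8θ₃/θ₁. -/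
set_option maxHeartbeats 2000000 in
theorem beta_deriv_bound_general (θ₁ θ₂ θ₃ L : ℝ) (h1 : 0 < θ₁) (h3 : 0 < θ₃)
    (hL0 : 0 < L) (hL1 : L < 1)
    (h2l : -(L * Real.sqrt (θ₁ * θ₃)) ≤ θ₂) (h2u : θ₂ < Real.sqrt (θ₁ * θ₃)) :
    ∀ t ∈ Set.Icc (0 : ℝ) 1,
      L ≤ (θ₁ + t * θ₂) / Real.sqrt (θ₁ * (θ₁ + 2 * t * θ₂ + t ^ 2 * θ₃)) →
      |deriv (fun t : ℝ => (θ₁ + t * θ₂) / Real.sqrt (θ₁ * (θ₁ + 2 * t * θ₂ + t ^ 2 * θ₃))) t|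
        ≤ 8 * θ₃ / θ₁ := by
  rintro t ⟨ht0, ht1⟩ hβ
  have hS : Real.sqrt (θ₁ * θ₃) ^ 2 = θ₁ * θ₃ := Real.sq_sqrt (by positivity)
  have hSpos : 0 < Real.sqrt (θ₁ * θ₃) := Real.sqrt_pos.mpr (by positivity)
  have hD : 0 < θ₁ * θ₃ - θ₂ ^ 2 := by
    have h2l' : -Real.sqrt (θ₁ * θ₃) < θ₂ := lt_of_lt_of_le (by nlinarith) h2l
    nlinarith
  -- Q is positive everywhere
  have hQpos : ∀ s : ℝ, 0 < θ₁ * (θ₁ + 2 * s * θ₂ + s ^ 2 * θ₃) := by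
    intro s
    have hid : θ₁ * (θ₁ + 2 * s * θ₂ + s ^ 2 * θ₃)
        = (θ₁ + s * θ₂) ^ 2 + s ^ 2 * (θ₁ * θ₃ - θ₂ ^ 2) := by ring
    rcases eq_or_ne s 0 with rfl | hs
    · nlinarith
    · have : 0 < s ^ 2 := by positivity
      nlinarith [sq_nonneg (θ₁ + s * θ₂)]
  have hQtpos : 0 < θ₁ * (θ₁ + 2 * t * θ₂ + t ^ 2 * θ₃) := hQpos t
  have hrpos' : 0 < Real.sqrt (θ₁ * (θ₁ + 2 * t * θ₂ + t ^ 2 * θ₃)) := Real.sqrt_pos.mpr hQtpos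
  -- derivative computation
  have hg : HasDerivAt (fun s : ℝ => θ₁ * (θ₁ + 2 * s * θ₂ + s ^ 2 * θ₃))
      (θ₁ * (2 * θ₂ + 2 * t * θ₃)) t := by
    have hp : HasDerivAt (fun s : ℝ => θ₁ + 2 * s * θ₂ + s ^ 2 * θ₃)
        (2 * θ₂ + 2 * t * θ₃) t := by
      have a : HasDerivAt (fun s : ℝ => 2 * s * θ₂) (2 * θ₂) t := by
        simpa [mul_comm, mul_assoc] using ((hasDerivAt_id t).const_mul 2).mul_const θ₂
      have b : HasDerivAt (fun s : ℝ => s ^ 2 * θ₃) (2 * t * θ₃) t := by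
        simpa using (hasDerivAt_pow 2 t).mul_const θ₃
      exact (a.const_add θ₁).add b
    simpa using hp.const_mul θ₁
  have hsq : HasDerivAt (fun s : ℝ => Real.sqrt (θ₁ * (θ₁ + 2 * s * θ₂ + s ^ 2 * θ₃)))
      (1 / (2 * Real.sqrt (θ₁ * (θ₁ + 2 * t * θ₂ + t ^ 2 * θ₃))) * (θ₁ * (2 * θ₂ + 2 * t * θ₃))) t := by
    have := (Real.hasDerivAt_sqrt hQtpos.ne').comp t hg
    exact this
  have hnum : HasDerivAt (fun s : ℝ => θ₁ + s * θ₂) θ₂ t := by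
    simpa using ((hasDerivAt_id t).mul_const θ₂).const_add θ₁
  have hdiv : HasDerivAt (fun s : ℝ => (θ₁ + s * θ₂) / Real.sqrt (θ₁ * (θ₁ + 2 * s * θ₂ + s ^ 2 * θ₃)))
      ((θ₂ * Real.sqrt (θ₁ * (θ₁ + 2 * t * θ₂ + t ^ 2 * θ₃)) - (θ₁ + t * θ₂) * (1 / (2 * Real.sqrt (θ₁ * (θ₁ + 2 * t * θ₂ + t ^ 2 * θ₃))) * (θ₁ * (2 * θ₂ + 2 * t * θ₃)))) / Real.sqrt (θ₁ * (θ₁ + 2 * t * θ₂ + t ^ 2 * θ₃)) ^ 2) t :=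
    hnum.div hsq hrpos'.ne'
  set Qt : ℝ := θ₁ * (θ₁ + 2 * t * θ₂ + t ^ 2 * θ₃) with hQt
  set r : ℝ := Real.sqrt Qt with hr
  have hrpos : 0 < r := hrpos'
  have hr2 : r ^ 2 = Qt := Real.sq_sqrt hQtpos.le
  clear_value r
  clear_value Qt
  have hderiv : deriv (fun s : ℝ => (θ₁ + s * θ₂) / Real.sqrt (θ₁ * (θ₁ + 2 * s * θ₂ + s ^ 2 * θ₃))) t
      = -(θ₁ * t * (θ₁ * θ₃ - θ₂ ^ 2)) / (Qt * r) := by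
    rw [hdiv.deriv]
    rw [div_eq_div_iff (by positivity) (by positivity)]
    field_simp
    subst hQt
    linear_combination (θ₂ * (θ₁ * (θ₁ + 2 * t * θ₂ + t ^ 2 * θ₃)) +
      θ₁ * t * (θ₁ * θ₃ - θ₂ ^ 2)) * hr2
  clear hdiv hsq hg hnum
  -- lower bound θ₁ + t θ₂ ≥ θ₁ / 2
  have hA : θ₁ / 2 ≤ θ₁ + t * θ₂ := by
    rcases le_or_gt 0 θ₂ with h | h
    · nlinarith
    · -- θ₂ < 0 case
      have hAL : L * r ≤ θ₁ + t * θ₂ := by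
        rw [← le_div_iff₀ hrpos] ; exact hβ
      have hA0 : 0 ≤ θ₁ + t * θ₂ := le_trans (by positivity) hAL
      have hsq2 : L ^ 2 * Qt ≤ (θ₁ + t * θ₂) ^ 2 := by
        nlinarith [hr2, mul_pos hL0 hrpos, hAL, hA0]
      have hid : Qt = (θ₁ + t * θ₂) ^ 2 + t ^ 2 * (θ₁ * θ₃ - θ₂ ^ 2) := by
        rw [hQt]; ring
      -- e = -θ₂, e ≤ L * √(θ₁θ₃), so e² ≤ L²θ₁θ₃
      have he2 : θ₂ ^ 2 ≤ L ^ 2 * (θ₁ * θ₃) := by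
        have : -θ₂ ≤ L * Real.sqrt (θ₁ * θ₃) := by linarith
        nlinarith [hSpos.le]
      by_contra hcon
      push_neg at hcon
      clear hderiv hβ
      have hte : θ₁ + t * θ₂ < t * (-θ₂) := by linarith
      have h1L : 0 < 1 - L ^ 2 := by nlinarith
      have hC1 : L ^ 2 * (t ^ 2 * (θ₁ * θ₃ - θ₂ ^ 2)) ≤ (1 - L ^ 2) * (θ₁ + t * θ₂) ^ 2 := by
        nlinarith [hsq2, hid]
      have hC2 : (θ₁ + t * θ₂) ^ 2 < (t * θ₂) ^ 2 := by nlinarith [hte, hA0]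
      have hC3 : L ^ 2 * (t ^ 2 * (θ₁ * θ₃ - θ₂ ^ 2)) < (1 - L ^ 2) * (t * θ₂) ^ 2 := by
        nlinarith [mul_lt_mul_of_pos_left hC2 h1L]
      nlinarith [hC3, mul_nonneg (sq_nonneg t) (show (0:ℝ) ≤ L ^ 2 * (θ₁ * θ₃) - θ₂ ^ 2 by linarith)]
    -- final bound
  rw [hderiv]
  have hnum0 : 0 ≤ θ₁ * t * (θ₁ * θ₃ - θ₂ ^ 2) := by positivity
  rw [abs_div, abs_neg, abs_of_nonneg hnum0, abs_of_pos (by positivity : (0:ℝ) < Qt * r)]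
  rw [div_le_div_iff₀ (by positivity) h1]
  have hQlb : θ₁ ^ 2 / 4 ≤ Qt := by
    have hid : Qt = (θ₁ + t * θ₂) ^ 2 + t ^ 2 * (θ₁ * θ₃ - θ₂ ^ 2) := by rw [hQt]; ring
    nlinarith [sq_nonneg t]
  have hrlb : θ₁ / 2 ≤ r := by
    rw [hr, show θ₁ / 2 = Real.sqrt ((θ₁/2)^2) by rw [Real.sqrt_sq (by positivity)]]
    exact Real.sqrt_le_sqrt (by nlinarith)
  have hstep : θ₁ ^ 3 / 8 ≤ Qt * r := by nlinarith [mul_le_mul hQlb hrlb (by positivity) hQtpos.le]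
  have hstep2 : θ₁ * t * (θ₁ * θ₃ - θ₂ ^ 2) * θ₁ ≤ θ₁ ^ 3 * θ₃ := by
    nlinarith [mul_nonneg (mul_nonneg (sub_nonneg.mpr ht1) hD.le) (sq_nonneg θ₁),
      mul_nonneg (sq_nonneg θ₂) (sq_nonneg θ₁), mul_nonneg (mul_nonneg ht0 hD.le) (sq_nonneg θ₁)]
  nlinarith [mul_pos h3 (mul_pos hQtpos hrpos)]
end

section
/- Let y, v ∈ ℂ^{n+1} with y ≠ 0 and ‖v‖ ≤ ‖y‖. Then Re⟨y+v, y⟩/(‖y‖·‖y+v‖) ≥ √(1 - ‖v‖²/‖y‖²), where if y + v = 0 the claim is interpreted as vacuous (both sides: if v = -y then ‖v‖ = ‖y‖ and the right side is 0). -/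
open scoped InnerProductSpace

theorem re_inner_div_ge_sqrt (n : ℕ) (y v : EuclideanSpace ℂ (Fin (n + 1)))
    (hy : y ≠ 0) (hv : ‖v‖ ≤ ‖y‖) :
    Real.sqrt (1 - ‖v‖ ^ 2 / ‖y‖ ^ 2) ≤ (⟪y + v, y⟫_ℂ).re / (‖y‖ * ‖y + v‖) := by
  set a := ‖y‖ with ha
  set b := ‖v‖ with hb
  have hapos : 0 < a := norm_pos_iff.mpr hy
  by_cases hyv : y + v = 0
  · have hv' : v = -y := by linear_combination (norm := abel_nf) hyv
    have hba : b = a := by rw [hb, hv', norm_neg]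
    rw [hyv, hba, norm_zero, mul_zero, div_zero, div_self (by positivity)]
    simp
  · have hcpos : 0 < ‖y + v‖ := norm_pos_iff.mpr hyv
    set c := ‖y + v‖ with hc
    set r := (⟪v, y⟫_ℂ).re with hr
    have hcs : |r| ≤ b * a := by
      calc |r| ≤ ‖⟪v, y⟫_ℂ‖ := Complex.abs_re_le_norm _
        _ ≤ b * a := by simpa using norm_inner_le_norm (𝕜 := ℂ) v y
    have hnum : (⟪y + v, y⟫_ℂ).re = a ^ 2 + r := by
      rw [inner_add_left, Complex.add_re, ← hr]
      have : (⟪y, y⟫_ℂ).re = a ^ 2 := by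
        simpa using inner_self_eq_norm_sq (𝕜 := ℂ) y
      rw [this]
    have hc2 : c ^ 2 = a ^ 2 + 2 * r + b ^ 2 := by
      rw [hc, ha, hb, hr, norm_add_sq (𝕜 := ℂ) y v, inner_re_symm]
      rfl
    have hrge : -(a * a) ≤ r := by
      have := (abs_le.mp hcs).1
      nlinarith
    have hRnn : 0 ≤ (a ^ 2 + r) / (a * c) := by
      apply div_nonneg (by nlinarith) (by positivity)
    rw [hnum]
    calc Real.sqrt (1 - b ^ 2 / a ^ 2)
        ≤ Real.sqrt (((a ^ 2 + r) / (a * c)) ^ 2) := by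
          apply Real.sqrt_le_sqrt
          rw [div_pow, show (1:ℝ) - b ^ 2 / a ^ 2 = (a ^ 2 - b ^ 2) / a ^ 2 by
            field_simp, div_le_div_iff₀ (by positivity) (by positivity), mul_pow, hc2]
          have key : (a ^ 2 - b ^ 2) * (a ^ 2 + 2 * r + b ^ 2) ≤ (a ^ 2 + r) ^ 2 := by
            nlinarith [sq_nonneg (r + b ^ 2)]
          nlinarith [mul_le_mul_of_nonneg_left key (sq_nonneg a)]
      _ = (a ^ 2 + r) / (a * c) := Real.sqrt_sq hRnn
end

section
/- Let y, v ∈ ℂ^{n+1} with y ≠ 0 and ‖v‖ < ‖y‖. Then the projective (Riemannian) distance d_R(y+v, y) = arccos(|⟨y+v,y⟩|/(‖y‖·‖y+v‖)) satisfies d_R(y+v, y) ≤ arcsin(‖v‖/‖y‖). -/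
open scoped InnerProductSpace

theorem projective_dist_le_arcsin (n : ℕ) (y v : EuclideanSpace ℂ (Fin (n + 1)))
    (hy : y ≠ 0) (hv : ‖v‖ < ‖y‖) :
    Real.arccos (‖⟪y + v, y⟫_ℂ‖ / (‖y‖ * ‖y + v‖)) ≤ Real.arcsin (‖v‖ / ‖y‖) := by
  set a := ‖y‖ with ha
  set b := ‖v‖ with hb
  have ha0 : 0 < a := norm_pos_iff.mpr hy
  have hb0 : 0 ≤ b := norm_nonneg v
  set t := (⟪v, y⟫_ℂ).re with ht
  have htle : |t| ≤ b * a := by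
    calc |t| ≤ ‖⟪v, y⟫_ℂ‖ := Complex.abs_re_le_norm _
    _ = ‖⟪v, y⟫_ℂ‖ := rfl
    _ ≤ b * a := norm_inner_le_norm v y
  have hnorm : ‖y + v‖ ^ 2 = a ^ 2 + 2 * t + b ^ 2 := by
    have h := @norm_add_sq ℂ _ _ _ _ y v
    have hre : RCLike.re ⟪y, v⟫_ℂ = t := by
      rw [RCLike.re_to_complex, ht, ← inner_conj_symm y v]
      simp
      rw [← inner_conj_symm v y, Complex.conj_re]
    rw [hre] at h
    exact h
  have hyv0 : 0 < ‖y + v‖ := by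
    have h2 : 0 < ‖y + v‖ ^ 2 := by
      rw [hnorm]
      nlinarith [abs_le.mp htle]
    have h3 := norm_nonneg (y + v)
    nlinarith
  have hre2 : (⟪y + v, y⟫_ℂ).re = a ^ 2 + t := by
    rw [inner_add_left]
    have h4 : (⟪y, y⟫_ℂ).re = a ^ 2 := by
      rw [← RCLike.re_to_complex, inner_self_eq_norm_sq (𝕜 := ℂ) y]
    rw [Complex.add_re, h4]
  have habs2 : (a ^ 2 - b ^ 2) * ‖y + v‖ ^ 2 ≤ (‖⟪y + v, y⟫_ℂ‖) ^ 2 := by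
    have h0 := Complex.abs_re_le_norm ⟪y + v, y⟫_ℂ
    rw [hre2] at h0
    have h1 : (a ^ 2 + t) ^ 2 ≤ (‖⟪y + v, y⟫_ℂ‖) ^ 2 := by
      calc (a ^ 2 + t) ^ 2 = |a ^ 2 + t| ^ 2 := (sq_abs _).symm
      _ ≤ (‖⟪y + v, y⟫_ℂ‖) ^ 2 := pow_le_pow_left₀ (abs_nonneg _) h0 2
    nlinarith [sq_nonneg (t + b ^ 2)]
  have hs1 : 0 ≤ 1 - (b / a) ^ 2 := by
    have : (b / a) ^ 2 ≤ 1 := by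
      rw [div_pow, div_le_one (by positivity)]
      nlinarith
    linarith
  have key : Real.sqrt (1 - (b / a) ^ 2) ≤ ‖⟪y + v, y⟫_ℂ‖ / (a * ‖y + v‖) := by
    rw [le_div_iff₀ (by positivity)]
    have heq : Real.sqrt (1 - (b / a) ^ 2) * (a * ‖y + v‖)
        = Real.sqrt ((1 - (b / a) ^ 2) * (a * ‖y + v‖) ^ 2) := by
      rw [Real.sqrt_mul hs1, Real.sqrt_sq (by positivity)]
    rw [heq]
    have heq2 : (1 - (b / a) ^ 2) * (a * ‖y + v‖) ^ 2 = (a ^ 2 - b ^ 2) * ‖y + v‖ ^ 2 := by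
      field_simp
    rw [heq2]
    calc Real.sqrt ((a ^ 2 - b ^ 2) * ‖y + v‖ ^ 2)
        ≤ Real.sqrt ((‖⟪y + v, y⟫_ℂ‖) ^ 2) := Real.sqrt_le_sqrt habs2
      _ = ‖⟪y + v, y⟫_ℂ‖ := Real.sqrt_sq (norm_nonneg _)
  have harcsin : Real.arcsin (b / a) = Real.arccos (Real.sqrt (1 - (b / a) ^ 2)) :=
    Real.arcsin_eq_arccos (by positivity)
  rw [harcsin, Real.arccos, Real.arccos]
  have := Real.monotone_arcsin key
  linarith
end

section
/- Let 1/2 < δ < 1, u₀ = 0.17586, a = (2δ-1)u₀/(√2 + 2δu₀), P = √2 + √(4 + 5/8), and c' = 1 - (1-a)^{P/√2}. Then c'/(P(1-a)) ≤ 3δu₀/2 and c'/P ≤ 3a/(2√2). -/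
theorem constants_inequalities (δ u₀ a P c' : ℝ)
    (hδ1 : 1 / 2 < δ) (hδ2 : δ < 1)
    (hu : u₀ = 0.17586)
    (ha : a = (2 * δ - 1) * u₀ / (Real.sqrt 2 + 2 * δ * u₀))
    (hP : P = Real.sqrt 2 + Real.sqrt (4 + 5 / 8))
    (hc : c' = 1 - (1 - a) ^ (P / Real.sqrt 2)) :
    c' / (P * (1 - a)) ≤ 3 * δ * u₀ / 2 ∧ c' / P ≤ 3 * a / (2 * Real.sqrt 2) := by
  subst hu
  have hs2 : (0:ℝ) < Real.sqrt 2 := Real.sqrt_pos.mpr (by norm_num)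
  have hs2sq : Real.sqrt 2 ^ 2 = 2 := Real.sq_sqrt (by norm_num)
  have hs465 : (0:ℝ) ≤ Real.sqrt (4 + 5 / 8) := Real.sqrt_nonneg _
  have hP0 : 0 < P := by rw [hP]; linarith
  have hu0 : (0:ℝ) < 0.17586 := by norm_num
  have hden : 0 < Real.sqrt 2 + 2 * δ * (0.17586:ℝ) := by nlinarith
  have ha0 : 0 ≤ a := by
    rw [ha]; apply div_nonneg _ hden.le; nlinarith
  have ha1 : a < 1 := by
    rw [ha, div_lt_one hden]; nlinarith
  have haD : a * (Real.sqrt 2 + 2 * δ * 0.17586) = (2 * δ - 1) * 0.17586 := by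
    rw [ha]; field_simp
  have hp1 : 1 ≤ P / Real.sqrt 2 := by
    rw [le_div_iff₀ hs2, one_mul, hP]; linarith
  have hbern : 1 + (P / Real.sqrt 2) * (-a) ≤ (1 + (-a)) ^ (P / Real.sqrt 2) :=
    one_add_mul_self_le_rpow_one_add (by linarith) hp1
  have hc' : c' ≤ (P / Real.sqrt 2) * a := by
    rw [hc]
    have : (1 - a : ℝ) = 1 + (-a) := by ring
    rw [this]; linarith
  have h1a : 0 < 1 - a := by linarith
  have key : a / Real.sqrt 2 ≤ 3 * δ * 0.17586 / 2 * (1 - a) := by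
    rw [div_le_iff₀ hs2]
    nlinarith [mul_pos hden hs2, sq_nonneg (δ - 1), sq_nonneg a]
  constructor
  · rw [div_le_iff₀ (by positivity)]
    have h2 : (P / Real.sqrt 2) * a = P * (a / Real.sqrt 2) := by ring
    have h3 : P * (a / Real.sqrt 2) ≤ P * (3 * δ * 0.17586 / 2 * (1 - a)) :=
      mul_le_mul_of_nonneg_left key hP0.le
    calc c' ≤ (P / Real.sqrt 2) * a := hc'
      _ = P * (a / Real.sqrt 2) := h2
      _ ≤ P * (3 * δ * 0.17586 / 2 * (1 - a)) := h3
      _ = 3 * δ * 0.17586 / 2 * (P * (1 - a)) := by ring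
  · rw [div_le_iff₀ hP0]
    have h2 : 3 * a / (2 * Real.sqrt 2) * P = P * ((3/2) * (a / Real.sqrt 2)) := by
      field_simp
    rw [h2]
    have h3 : a ≤ (3/2) * a := by linarith
    calc c' ≤ (P / Real.sqrt 2) * a := hc'
      _ = P * (a / Real.sqrt 2) := by ring
      _ ≤ P * ((3/2) * (a / Real.sqrt 2)) := by
          apply mul_le_mul_of_nonneg_left _ hP0.le
          have := div_nonneg ha0 hs2.le
          linarith
end
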